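/- arXiv:1103.1268 — 2 statements merged into one kernel-verified Lean document; each statement's English description precedes it below -/
import Mathlib

section
/- Let a ≤ b be integers, let w be a positive integer, and let x, y be complex numbers such that none of the complex numbers y+1, x+k+1 (for a ≤ k ≤ b), and x+k−y+1 (for a ≤ k ≤ b) is a nonpositive integer, and such that y−x−b+i ≠ 0 for all integers 1 ≤ i ≤ b−a. Then Σ_{k=a}^{b−1} [ (x+k+1)^w · H1(y−x−b, b−k−1) − (x−y+k)^w · H1(y−x−b, b−k) ] · binom(x+k, y)^w = −(y+1)^w · binom(x+a, y+1)^w · H1(y−x−b, b−a). -/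
open Finset

/-- Generalized binomial coefficient via the complex Gamma function. -/
noncomputable def cbinom (u v : ℂ) : ℂ :=
  Complex.Gamma (u + 1) / (Complex.Gamma (v + 1) * Complex.Gamma (u - v + 1))

/-- Generalized harmonic number of order 1 with complex offset `c`:
`H1 c n = ∑_{i=1}^{n} 1/(c+i)` (zero if `n ≤ 0`). -/
noncomputable def H1 (c : ℂ) (n : ℤ) : ℂ :=
  ∑ i ∈ Finset.range n.toNat, 1 / (c + (i : ℂ) + 1)

lemma cancel_aux (a A B : ℂ) (ha : a ≠ 0) : a * (A / (a * B)) = A / B := by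
  rw [← mul_div_assoc, mul_div_mul_left _ _ ha]

lemma key1 (u v : ℂ) (hv : v + 1 ≠ 0) :
    (v + 1) * cbinom u (v + 1) = (u - v) * cbinom u v := by
  unfold cbinom
  have h1 : Complex.Gamma (v + 1 + 1) = (v + 1) * Complex.Gamma (v + 1) :=
    Complex.Gamma_add_one _ hv
  have e : u - (v + 1) + 1 = u - v := by ring
  rw [e, h1]
  by_cases h2 : u - v = 0
  · rw [h2, Complex.Gamma_zero]
    simp
  · have h3 : Complex.Gamma (u - v + 1) = (u - v) * Complex.Gamma (u - v) :=
      Complex.Gamma_add_one _ h2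
    rw [h3, mul_assoc, cancel_aux _ _ _ hv, mul_left_comm, cancel_aux _ _ _ h2]

lemma key2 (u v : ℂ) (hv : v + 1 ≠ 0) (hu : u + 1 ≠ 0) :
    (v + 1) * cbinom (u + 1) (v + 1) = (u + 1) * cbinom u v := by
  unfold cbinom
  have h1 : Complex.Gamma (v + 1 + 1) = (v + 1) * Complex.Gamma (v + 1) :=
    Complex.Gamma_add_one _ hv
  have h2 : Complex.Gamma (u + 1 + 1) = (u + 1) * Complex.Gamma (u + 1) :=
    Complex.Gamma_add_one _ hu
  have e : u + 1 - (v + 1) + 1 = u - v + 1 := by ring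
  rw [e, h1, h2, mul_assoc, cancel_aux _ _ _ hv, mul_div_assoc]

lemma tele_aux (g : ℤ → ℂ) (a : ℤ) (n : ℕ) :
    ∑ k ∈ Finset.Ico a (a + n), (g k - g (k + 1)) = g a - g (a + n) := by
  induction n with
  | zero => simp
  | succ n ih =>
    have h : a ≤ a + (n : ℤ) := by omega
    have e : (a : ℤ) + (n + 1 : ℕ) = (a + n) + 1 := by push_cast; ring
    have hins : Finset.Ico a ((a + (n : ℤ)) + 1) = insert (a + (n : ℤ)) (Finset.Ico a (a + n)) := by
      ext m; simp only [Finset.mem_Ico, Finset.mem_insert]; omega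
    rw [e, hins, Finset.sum_insert (by simp), ih]
    ring

theorem harmonic_identity_1b (a b : ℤ) (hab : a ≤ b) (w : ℕ) (hw : 0 < w) (x y : ℂ)
    (hy : ∀ m : ℕ, y + 1 ≠ -(m : ℂ))
    (hx1 : ∀ k : ℤ, a ≤ k → k ≤ b → ∀ m : ℕ, x + (k : ℂ) + 1 ≠ -(m : ℂ))
    (hx2 : ∀ k : ℤ, a ≤ k → k ≤ b → ∀ m : ℕ, x + (k : ℂ) - y + 1 ≠ -(m : ℂ))
    (hh : ∀ i : ℤ, 1 ≤ i → i ≤ b - a → y - x - (b : ℂ) + (i : ℂ) ≠ 0) :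
    ∑ k ∈ Finset.Ico a b,
        (((x + (k : ℂ) + 1) ^ w * H1 (y - x - (b : ℂ)) (b - k - 1) -
          (x - y + (k : ℂ)) ^ w * H1 (y - x - (b : ℂ)) (b - k)) * cbinom (x + (k : ℂ)) y ^ w) =
    -((y + 1) ^ w * cbinom (x + (a : ℂ)) (y + 1) ^ w * H1 (y - x - (b : ℂ)) (b - a)) := by
  have hy0 : y + 1 ≠ 0 := by simpa using hy 0
  set c : ℂ := y - x - (b : ℂ) with hc
  set g : ℤ → ℂ := fun k => -((y + 1) ^ w * cbinom (x + (k : ℂ)) (y + 1) ^ w * H1 c (b - k))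
    with hg
  have hterm : ∀ k ∈ Finset.Ico a b,
      ((x + (k : ℂ) + 1) ^ w * H1 c (b - k - 1) -
        (x - y + (k : ℂ)) ^ w * H1 c (b - k)) * cbinom (x + (k : ℂ)) y ^ w
      = g k - g (k + 1) := by
    intro k hk
    rw [Finset.mem_Ico] at hk
    have hxk1 : (x + (k : ℂ)) + 1 ≠ 0 := by simpa using hx1 k hk.1 hk.2.le 0
    have hgk : g k = -((x + (k : ℂ) - y) ^ w * cbinom (x + (k : ℂ)) y ^ w * H1 c (b - k)) := by
      simp only [hg]
      rw [← mul_pow, key1 (x + (k : ℂ)) y hy0, mul_pow]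
    have hgk1 : g (k + 1)
        = -(((x + (k : ℂ)) + 1) ^ w * cbinom (x + (k : ℂ)) y ^ w * H1 c (b - k - 1)) := by
      simp only [hg]
      have e1 : ((k + 1 : ℤ) : ℂ) = (k : ℂ) + 1 := by push_cast; ring
      have e2 : x + ((k : ℂ) + 1) = (x + (k : ℂ)) + 1 := by ring
      have e3 : b - (k + 1) = b - k - 1 := by ring
      rw [e1, e2, e3, ← mul_pow, key2 (x + (k : ℂ)) y hy0 hxk1, mul_pow]
    rw [hgk, hgk1]
    ring
  rw [Finset.sum_congr rfl hterm]
  have ht := tele_aux g a (b - a).toNat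
  rw [show a + ((b - a).toNat : ℤ) = b by omega] at ht
  rw [ht]
  have hgb : g b = 0 := by
    simp [hg, H1]
  rw [hgb, sub_zero]
end

section
/- Let a ≤ b be integers, let w be a positive integer, and let x, y be complex numbers such that x+1 is not a nonpositive integer, none of the complex numbers y+k+1 and x−y−k+1 (for a ≤ k ≤ b) is a nonpositive integer, and x−y−b+1+i ≠ 0 for all integers 1 ≤ i ≤ b−a. Then Σ_{k=a}^{b−1} [ (−y−k−1)^w · H1(x−y−b+1, b−k−1) − (x−y−k+1)^w · H1(x−y−b+1, b−k) ] · (−1)^{wk} · binom(x, y+k)^{−w} = −(x+1)^w · (−1)^{wa} · binom(x+1, y+a)^{−w} · H1(x−y−b+1, b−a). -/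
open Finset

lemma telescope_Ico (f : ℤ → ℂ) (a b : ℤ) (h : a ≤ b) :
    ∑ k ∈ Finset.Ico a b, (f (k+1) - f k) = f b - f a := by
  obtain ⟨n, rfl⟩ : ∃ n : ℕ, b = a + n := ⟨(b-a).toNat, by omega⟩
  induction n with
  | zero => simp
  | succ n ih =>
      have hins : Finset.Ico a (a + (n+1 : ℕ)) = insert (a + n) (Finset.Ico a (a + n)) := by
        ext m; simp; omega
      rw [hins, Finset.sum_insert (by simp), ih (by omega)]
      push_cast
      ring_nf

lemma key (w : ℕ) (x y z A B E : ℂ)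
    (hx0 : x + 1 ≠ 0) (hΓx : Complex.Gamma (x+1) ≠ 0)
    (hy0 : y + z + 1 ≠ 0) (hΓy : Complex.Gamma (y+z+1) ≠ 0)
    (hz0 : x - y - z + 1 ≠ 0) (hΓz : Complex.Gamma (x-y-z+1) ≠ 0) :
    ((-y - z - 1) ^ w * A - (x - y - z + 1) ^ w * B) *
      (E * cbinom x (y + z) ^ (-(w : ℤ)))
    = (x + 1) ^ w * (E * (-1 : ℂ) ^ w) * cbinom (x+1) (y + z + 1) ^ (-(w : ℤ)) * A
      - (x + 1) ^ w * E * cbinom (x+1) (y + z) ^ (-(w : ℤ)) * B := by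
  have earg : x - (y + z) + 1 = x - y - z + 1 := by ring
  have e1 : cbinom (x+1) (y+z+1) = (x+1) / (y+z+1) * cbinom x (y+z) := by
    unfold cbinom
    have g1 : Complex.Gamma (x+1+1) = (x+1) * Complex.Gamma (x+1) :=
      Complex.Gamma_add_one _ hx0
    have g2 : Complex.Gamma (y+z+1+1) = (y+z+1) * Complex.Gamma (y+z+1) :=
      Complex.Gamma_add_one _ hy0
    have e : x + 1 - (y+z+1) + 1 = x - y - z + 1 := by ring
    rw [g1, g2, e, earg]
    generalize hp : Complex.Gamma (x+1) = P at hΓx ⊢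
    generalize hq : Complex.Gamma (y+z+1) = Q at hΓy ⊢
    generalize hr : Complex.Gamma (x-y-z+1) = R at hΓz ⊢
    field_simp
  have e2 : cbinom (x+1) (y+z) = (x+1) / (x-y-z+1) * cbinom x (y+z) := by
    unfold cbinom
    have g1 : Complex.Gamma (x+1+1) = (x+1) * Complex.Gamma (x+1) :=
      Complex.Gamma_add_one _ hx0
    have e : x + 1 - (y+z) + 1 = (x - y - z + 1) + 1 := by ring
    have g3 : Complex.Gamma ((x-y-z+1)+1) = (x-y-z+1) * Complex.Gamma (x-y-z+1) :=
      Complex.Gamma_add_one _ hz0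
    rw [g1, e, g3, earg]
    generalize hp : Complex.Gamma (x+1) = P at hΓx ⊢
    generalize hq : Complex.Gamma (y+z+1) = Q at hΓy ⊢
    generalize hr : Complex.Gamma (x-y-z+1) = R at hΓz ⊢
    field_simp
  have hC : cbinom x (y+z) ≠ 0 := by
    unfold cbinom
    rw [earg]
    exact div_ne_zero hΓx (mul_ne_zero hΓy hΓz)
  rw [e1, e2]
  rw [zpow_neg, zpow_neg, zpow_neg, zpow_natCast, zpow_natCast, zpow_natCast]
  rw [mul_pow, mul_pow, div_pow, div_pow]
  have hpow : (-y - z - 1) ^ w = (-1:ℂ)^w * (y+z+1)^w := by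
    rw [← mul_pow]; ring_nf
  rw [hpow]
  have hx0w : (x+1)^w ≠ 0 := pow_ne_zero _ hx0
  have hy0w : (y+z+1)^w ≠ 0 := pow_ne_zero _ hy0
  have hz0w : (x-y-z+1)^w ≠ 0 := pow_ne_zero _ hz0
  have hCw : cbinom x (y+z) ^ w ≠ 0 := pow_ne_zero _ hC
  generalize cbinom x (y+z) ^ w = C at hCw ⊢
  generalize hu : (x+1)^w = U at hx0w ⊢
  generalize hv : (y+z+1)^w = V at hy0w ⊢
  generalize hs : (x-y-z+1)^w = S at hz0w ⊢
  field_simp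

theorem harmonic_identity_3b (a b : ℤ) (hab : a ≤ b) (w : ℕ) (hw : 0 < w) (x y : ℂ)
    (hx : ∀ m : ℕ, x + 1 ≠ -(m : ℂ))
    (h1 : ∀ k : ℤ, a ≤ k → k ≤ b → ∀ m : ℕ, y + (k : ℂ) + 1 ≠ -(m : ℂ))
    (h2 : ∀ k : ℤ, a ≤ k → k ≤ b → ∀ m : ℕ, x - y - (k : ℂ) + 1 ≠ -(m : ℂ))
    (hh : ∀ i : ℤ, 1 ≤ i → i ≤ b - a → x - y - (b : ℂ) + 1 + (i : ℂ) ≠ 0) :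
    ∑ k ∈ Finset.Ico a b,
        (((-y - (k : ℂ) - 1) ^ w * H1 (x - y - (b : ℂ) + 1) (b - k - 1) -
          (x - y - (k : ℂ) + 1) ^ w * H1 (x - y - (b : ℂ) + 1) (b - k)) *
          ((-1 : ℂ) ^ ((w : ℤ) * k) * cbinom x (y + (k : ℂ)) ^ (-(w : ℤ)))) =
    -((x + 1) ^ w * (-1 : ℂ) ^ ((w : ℤ) * a) * cbinom (x + 1) (y + (a : ℂ)) ^ (-(w : ℤ)) *
      H1 (x - y - (b : ℂ) + 1) (b - a)) := by
  set c : ℂ := x - y - (b : ℂ) + 1 with hc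
  set G : ℤ → ℂ := fun k =>
    (x + 1) ^ w * (-1 : ℂ) ^ ((w : ℤ) * k) * cbinom (x + 1) (y + (k : ℂ)) ^ (-(w : ℤ)) *
      H1 c (b - k) with hG
  have hx0 : x + 1 ≠ 0 := by simpa using hx 0
  have hΓx : Complex.Gamma (x + 1) ≠ 0 := Complex.Gamma_ne_zero hx
  have hstep : ∀ k ∈ Finset.Ico a b,
      (((-y - (k : ℂ) - 1) ^ w * H1 c (b - k - 1) -
        (x - y - (k : ℂ) + 1) ^ w * H1 c (b - k)) *
        ((-1 : ℂ) ^ ((w : ℤ) * k) * cbinom x (y + (k : ℂ)) ^ (-(w : ℤ))))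
      = G (k + 1) - G k := by
    intro k hk
    simp only [Finset.mem_Ico] at hk
    have hkb : k ≤ b := le_of_lt hk.2
    have hy0 : y + (k : ℂ) + 1 ≠ 0 := by simpa using h1 k hk.1 hkb 0
    have hΓy : Complex.Gamma (y + (k : ℂ) + 1) ≠ 0 := Complex.Gamma_ne_zero (h1 k hk.1 hkb)
    have hz0 : x - y - (k : ℂ) + 1 ≠ 0 := by simpa using h2 k hk.1 hkb 0
    have hΓz : Complex.Gamma (x - y - (k : ℂ) + 1) ≠ 0 := Complex.Gamma_ne_zero (h2 k hk.1 hkb)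
    have hkey := key w x y (k : ℂ) (H1 c (b - k - 1)) (H1 c (b - k))
      ((-1 : ℂ) ^ ((w : ℤ) * k)) hx0 hΓx hy0 hΓy hz0 hΓz
    rw [hkey]
    have e3 : ((k + 1 : ℤ) : ℂ) = (k : ℂ) + 1 := by push_cast; ring
    have e4 : b - (k + 1) = b - k - 1 := by ring
    have e5 : (-1 : ℂ) ^ ((w : ℤ) * (k + 1)) = (-1 : ℂ) ^ ((w : ℤ) * k) * (-1 : ℂ) ^ w := by
      rw [mul_add, mul_one, zpow_add₀ (by norm_num : (-1 : ℂ) ≠ 0), zpow_natCast]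
    have e6 : y + ((k : ℂ) + 1) = y + (k : ℂ) + 1 := by ring
    simp only [hG, e3, e4, e5, e6]
  rw [Finset.sum_congr rfl hstep, telescope_Ico G a b hab]
  have hGb : G b = 0 := by simp [hG, H1]
  rw [hGb]
  show (0:ℂ) - G a = _
  rw [zero_sub]
end
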